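/- Let C be a small category whose skeleton Sk has the property that every automorphism of Sk fixes all objects. Then every autoequivalence of C is naturally isomorphic to an automorphism of C, provided that additionally any automorphism of Sk sends each object X to an object whose isomorphism class in C has the same cardinality as that of X (which is automatic when objects are fixed). -/

import Mathlib

open CategoryTheory

section Aux
variable {C : Type*} [SmallCategory C] (P : C → Prop)
  (hsk : ∀ A : C, ∃! B : C, P B ∧ Nonempty (A ≅ B))

noncomputable def sk (A : C) : C := (hsk A).choose

lemma sk_P (A : C) : P (sk P hsk A) := (hsk A).choose_spec.1.1

noncomputable def skIso (A : C) : A ≅ sk P hsk A := (hsk A).choose_spec.1.2.some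

lemma sk_unique {A B : C} (hB : P B) (h : Nonempty (A ≅ B)) : B = sk P hsk A :=
  (hsk A).choose_spec.2 B ⟨hB, h⟩

lemma sk_eq_of_iso {A B : C} (h : A ≅ B) : sk P hsk A = sk P hsk B :=
  (sk_unique P hsk (sk_P P hsk B) ⟨h ≪≫ skIso P hsk B⟩).symm

lemma sk_fix {A : C} (hA : P A) : sk P hsk A = A :=
  (sk_unique P hsk hA ⟨Iso.refl A⟩).symm

variable (π : C ⥤ C)

noncomputable def psi : ObjectProperty.FullSubcategory P ⥤ ObjectProperty.FullSubcategory P where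
  obj X := ⟨sk P hsk (π.obj X.obj), sk_P P hsk _⟩
  map {X Y} f := ObjectProperty.homMk
    (show sk P hsk (π.obj X.obj) ⟶ sk P hsk (π.obj Y.obj) from
      (skIso P hsk (π.obj X.obj)).inv ≫ π.map f.hom ≫
        (skIso P hsk (π.obj Y.obj)).hom)
  map_id X := by
    ext
    simp
  map_comp {X Y Z} f g := by
    ext
    simp


variable [π.IsEquivalence]

instance psi_faithful : (psi P hsk π).Faithful where
  map_injective {X Y} {f g} h := by
    have h' : π.map f.hom = π.map g.hom := by
      have := congrArg (fun k => k.hom) h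
      simp only [psi, ObjectProperty.homMk_hom] at this
      rw [Iso.cancel_iso_inv_left, Iso.cancel_iso_hom_right] at this
      exact this
    exact InducedCategory.hom_ext (π.map_injective h')

instance psi_full : (psi P hsk π).Full where
  map_surjective {X Y} g := by
    refine ⟨ObjectProperty.homMk (π.preimage ((skIso P hsk (π.obj X.obj)).hom ≫ g.hom ≫ (skIso P hsk (π.obj Y.obj)).inv)), ?_⟩
    ext
    simp [psi]

lemma psi_obj_bij : Function.Bijective (psi P hsk π).obj := by
  constructor
  · intro X Y h
    have h' : sk P hsk (π.obj X.obj) = sk P hsk (π.obj Y.obj) := congrArg ObjectProperty.FullSubcategory.obj h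
    have iPQ : π.obj X.obj ≅ π.obj Y.obj :=
      skIso P hsk (π.obj X.obj) ≪≫ eqToIso h' ≪≫ (skIso P hsk (π.obj Y.obj)).symm
    have iXY : X.obj ≅ Y.obj := π.preimageIso iPQ
    have : Y.obj = sk P hsk X.obj := sk_unique P hsk Y.property ⟨iXY⟩
    have hx : sk P hsk X.obj = X.obj := sk_fix P hsk X.property
    cases X; cases Y
    simp_all
  · intro Y
    refine ⟨⟨sk P hsk ((π.asEquivalence.inverse).obj Y.obj), sk_P P hsk _⟩, ?_⟩
    have h1 : sk P hsk (π.obj (sk P hsk ((π.asEquivalence.inverse).obj Y.obj)))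
        = sk P hsk (π.obj ((π.asEquivalence.inverse).obj Y.obj)) :=
      sk_eq_of_iso P hsk (π.mapIso (skIso P hsk _).symm)
    have h2 : sk P hsk (π.obj ((π.asEquivalence.inverse).obj Y.obj)) = sk P hsk Y.obj :=
      sk_eq_of_iso P hsk (π.asEquivalence.counitIso.app Y.obj)
    have h3 : sk P hsk Y.obj = Y.obj := sk_fix P hsk Y.property
    cases Y
    simp only [psi]
    congr 1
    simp_all

noncomputable def psiEquiv : ObjectProperty.FullSubcategory P ≃ ObjectProperty.FullSubcategory P :=
  Equiv.ofBijective _ (psi_obj_bij P hsk π)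

lemma psi_sect (X : ObjectProperty.FullSubcategory P) :
    (psi P hsk π).obj ((psiEquiv P hsk π).symm X) = X :=
  (psiEquiv P hsk π).apply_symm_apply X

noncomputable def psiInv : ObjectProperty.FullSubcategory P ⥤ ObjectProperty.FullSubcategory P where
  obj X := (psiEquiv P hsk π).symm X
  map {X Y} f := (psi P hsk π).preimage
    (eqToHom (psi_sect P hsk π X) ≫ f ≫ eqToHom (psi_sect P hsk π Y).symm)
  map_id X := by
    apply (psi P hsk π).map_injective
    simp
  map_comp {X Y Z} f g := by
    apply (psi P hsk π).map_injective
    simp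

lemma psi_comp_psiInv : psi P hsk π ⋙ psiInv P hsk π = 𝟭 (ObjectProperty.FullSubcategory P) := by
  refine CategoryTheory.Functor.ext (fun X => (psiEquiv P hsk π).symm_apply_apply X) (fun X Y f => ?_)
  apply (psi P hsk π).map_injective
  simp only [Functor.map_comp, eqToHom_map]
  simp [psiInv]
  exact congrArg (fun k => k ≫ _) (eqToHom_map _ _).symm

lemma psiInv_comp_psi : psiInv P hsk π ⋙ psi P hsk π = 𝟭 (ObjectProperty.FullSubcategory P) := by
  refine CategoryTheory.Functor.ext (fun X => psi_sect P hsk π X) (fun X Y f => ?_)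
  simp [psiInv]

end Aux

theorem stmt_7 {C : Type*} [SmallCategory C] (P : C → Prop)
    (hsk : ∀ A : C, ∃! B : C, P B ∧ Nonempty (A ≅ B))
    (hfix : ∀ ψ : ObjectProperty.FullSubcategory P ⥤ ObjectProperty.FullSubcategory P,
      (∃ ψ' : ObjectProperty.FullSubcategory P ⥤ ObjectProperty.FullSubcategory P,
        ψ ⋙ ψ' = 𝟭 (ObjectProperty.FullSubcategory P) ∧ ψ' ⋙ ψ = 𝟭 (ObjectProperty.FullSubcategory P)) →
      ∀ X : ObjectProperty.FullSubcategory P, ψ.obj X = X) :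
    ∀ π : C ⥤ C, π.IsEquivalence →
      ∃ F : C ⥤ C, (∃ G : C ⥤ C, F ⋙ G = 𝟭 C ∧ G ⋙ F = 𝟭 C) ∧ Nonempty (π ≅ F) := by
  intro π hπ
  haveI := hπ
  have hpsi := hfix (psi P hsk π)
    ⟨psiInv P hsk π, psi_comp_psiInv P hsk π, psiInv_comp_psi P hsk π⟩
  have hsk' : ∀ A : C, sk P hsk (π.obj A) = sk P hsk A := by
    intro A
    have h1 : sk P hsk (π.obj (sk P hsk A)) = sk P hsk A :=
      congrArg ObjectProperty.FullSubcategory.obj (hpsi ⟨sk P hsk A, sk_P P hsk A⟩)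
    have h2 : sk P hsk (π.obj (sk P hsk A)) = sk P hsk (π.obj A) :=
      sk_eq_of_iso P hsk (π.mapIso (skIso P hsk A).symm)
    rw [← h2, h1]
  let i : ∀ A : C, π.obj A ≅ A := fun A =>
    skIso P hsk (π.obj A) ≪≫ eqToIso (hsk' A) ≪≫ (skIso P hsk A).symm
  refine ⟨{ obj := id, map := fun {A B} f => (i A).inv ≫ π.map f ≫ (i B).hom,
            map_id := by intros; simp, map_comp := by intros; simp },
          ⟨{ obj := id, map := fun {A B} g => π.preimage ((i A).hom ≫ g ≫ (i B).inv),
             map_id := by intro A; apply π.map_injective; simp,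
             map_comp := by intro A B D f g; apply π.map_injective; simp }, ?_, ?_⟩,
          ⟨NatIso.ofComponents i (by intro A B f; simp)⟩⟩
  · refine CategoryTheory.Functor.ext (fun _ => rfl) (fun A B f => ?_)
    apply π.map_injective
    simp
  · refine CategoryTheory.Functor.ext (fun _ => rfl) (fun A B f => ?_)
    simp
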